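/- Let a : ℕ → ℕ be an injective computable function whose range A is not computable. Then the real number s = Σ_{m=0}^∞ 2^{-a(m)} is not a computable real number. -/

import Mathlib

def specP (a : ℕ → ℕ) : ℕ → ℕ × ℕ :=
  fun N => Nat.rec ((0, 0) : ℕ × ℕ) (fun M p => (p.1 * 2 ^ a M + 2 ^ p.2, p.2 + a M)) N

def specB (a : ℕ → ℕ) : ℕ → ℕ → Bool :=
  fun n N => Nat.rec false (fun M b => b || (a M == n)) N

theorem specB_iff (a : ℕ → ℕ) (n N : ℕ) : specB a n N = true ↔ ∃ m < N, a m = n := by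
  induction N with
  | zero => simp [specB]
  | succ M ih =>
    show (specB a n M || (a M == n)) = true ↔ _
    rw [Bool.or_eq_true, ih, beq_iff_eq]
    constructor
    · rintro (⟨m, hm, h⟩ | h)
      · exact ⟨m, by omega, h⟩
      · exact ⟨M, by omega, h⟩
    · rintro ⟨m, hm, h⟩
      rcases Nat.lt_succ_iff_lt_or_eq.mp hm with h' | rfl
      · exact Or.inl ⟨m, h', h⟩
      · exact Or.inr h

theorem specP_spec (a : ℕ → ℕ) (N : ℕ) :
    ((specP a N).1 : ℝ) / 2 ^ (specP a N).2 = ∑ m ∈ Finset.range N, (2 : ℝ) ^ (-(a m : ℤ)) := by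
  induction N with
  | zero => simp [specP]
  | succ M ih =>
    have hP : specP a (M + 1)
        = ((specP a M).1 * 2 ^ a M + 2 ^ (specP a M).2, (specP a M).2 + a M) := rfl
    rw [hP, Finset.sum_range_succ, ← ih]
    have h1 : ((2 : ℝ)) ^ (-(a M : ℤ)) = ((2 : ℝ) ^ a M)⁻¹ := by
      rw [zpow_neg, zpow_natCast]
    rw [h1]
    push_cast
    rw [pow_add]
    have h2 : ((2 : ℝ) ^ (specP a M).2) ≠ 0 := by positivity
    have h3 : ((2 : ℝ) ^ a M) ≠ 0 := by positivity
    field_simp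


def specTest (a : ℕ → ℕ) (q : ℕ → ℤ) (n N : ℕ) : Bool :=
  (Encodable.encode (q (n + 2)) % 2 == 1) ||
    decide (Encodable.encode (q (n + 2)) / 2 * 2 ^ (specP a N).2
      < 2 ^ (n + 2) * (specP a N).1 + 2 ^ (specP a N).2)

theorem specTest_iff (a : ℕ → ℕ) (q : ℕ → ℤ) (n N : ℕ) :
    specTest a q n N = true ↔
      ((q (n + 2) : ℝ) - 1) / 2 ^ (n + 2)
        < ((specP a N).1 : ℝ) / 2 ^ (specP a N).2 := by
  set u := (specP a N).1
  set v := (specP a N).2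
  rw [specTest, Bool.or_eq_true, beq_iff_eq, decide_eq_true_eq]
  have hv : (0 : ℝ) < 2 ^ v := by positivity
  have hk : (0 : ℝ) < 2 ^ (n + 2) := by positivity
  rcases hz : q (n + 2) with m | m
  · have he : Encodable.encode (Int.ofNat m) = 2 * m := rfl
    rw [he]
    have h2 : 2 * m % 2 = 0 := by omega
    have h3 : 2 * m / 2 = m := by omega
    rw [h2, h3]
    have hc : ((Int.ofNat m : ℤ) : ℝ) = (m : ℝ) := by simp
    rw [hc, div_lt_div_iff₀ hk hv]
    constructor
    · rintro (h | h)
      · omega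
      · have : ((m : ℝ)) * 2 ^ v < 2 ^ (n + 2) * u + 2 ^ v := by exact_mod_cast h
        nlinarith
    · intro h
      refine Or.inr ?_
      have : ((m : ℝ)) * 2 ^ v < 2 ^ (n + 2) * u + 2 ^ v := by nlinarith
      exact_mod_cast this
  · have he : Encodable.encode (Int.negSucc m) = 2 * m + 1 := rfl
    rw [he]
    have h2 : (2 * m + 1) % 2 = 1 := by omega
    simp only [h2, true_or, true_iff]
    have hneg : ((Int.negSucc m : ℝ) - 1) / 2 ^ (n + 2) < 0 := by
      apply div_neg_of_neg_of_pos _ hk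
      have h4 : (Int.negSucc m : ℝ) = -(m + 1) := by push_cast [Int.cast_negSucc]; ring
      have h5 : (0 : ℝ) ≤ m := Nat.cast_nonneg m
      rw [h4]; linarith
    calc ((Int.negSucc m : ℝ) - 1) / 2 ^ (n + 2) < 0 := hneg
      _ ≤ (u : ℝ) / 2 ^ v := by positivity
theorem specP_computable (hcomp : Computable a) : Computable (specP a) := by
  have cadd : Computable₂ ((· + ·) : ℕ → ℕ → ℕ) := Primrec.nat_add.to_comp
  have cmul : Computable₂ ((· * ·) : ℕ → ℕ → ℕ) := Primrec.nat_mul.to_comp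
  have cpow : Computable₂ ((· ^ ·) : ℕ → ℕ → ℕ) :=
    (Primrec₂.unpaired'.mp Nat.Primrec.pow).to_comp
  have hM : Computable (fun z : ℕ × (ℕ × (ℕ × ℕ)) => z.2.1) :=
    Computable.fst.comp Computable.snd
  have hu : Computable (fun z : ℕ × (ℕ × (ℕ × ℕ)) => z.2.2.1) :=
    Computable.fst.comp (Computable.snd.comp Computable.snd)
  have hv : Computable (fun z : ℕ × (ℕ × (ℕ × ℕ)) => z.2.2.2) :=
    Computable.snd.comp (Computable.snd.comp Computable.snd)
  have haM : Computable (fun z : ℕ × (ℕ × (ℕ × ℕ)) => a z.2.1) := hcomp.comp hM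
  have h2v : Computable (fun z : ℕ × (ℕ × (ℕ × ℕ)) => 2 ^ z.2.2.2) :=
    cpow.comp (Computable.const 2) hv
  have hstep : Computable₂ (fun (_ : ℕ) (p : ℕ × (ℕ × ℕ)) =>
      ((p.2.1 * 2 ^ a p.1 + 2 ^ p.2.2, p.2.2 + a p.1) : ℕ × ℕ)) :=
    Computable.pair
      (cadd.comp (cmul.comp hu (cpow.comp (Computable.const 2) haM)) h2v)
      (cadd.comp hv haM)
  exact (Computable.nat_rec Computable.id (Computable.const ((0, 0) : ℕ × ℕ)) hstep).of_eq
    fun n => rfl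

theorem specB_computable (hcomp : Computable a) : Computable₂ (specB a) := by
  have hor : Computable₂ ((· || ·) : Bool → Bool → Bool) := (Primrec.dom_bool₂ _).to_comp
  have hbeq : Computable₂ (fun x y : ℕ => x == y) := Primrec.beq.to_comp
  have hstep : Computable₂ (fun (p : ℕ × ℕ) (y : ℕ × Bool) => y.2 || (a y.1 == p.1)) :=
    hor.comp (Computable.snd.comp Computable.snd)
      (hbeq.comp (hcomp.comp (Computable.fst.comp Computable.snd))
        (Computable.fst.comp Computable.fst))
  exact (Computable.nat_rec (Computable.snd) (Computable.const false) hstep).of_eq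
    fun p => rfl

theorem specTest_computable (hcomp : Computable a) (hq : Computable q) :
    Computable₂ (specTest a q) := by
  have cadd : Computable₂ ((· + ·) : ℕ → ℕ → ℕ) := Primrec.nat_add.to_comp
  have cmul : Computable₂ ((· * ·) : ℕ → ℕ → ℕ) := Primrec.nat_mul.to_comp
  have cdiv : Computable₂ ((· / ·) : ℕ → ℕ → ℕ) := Primrec.nat_div.to_comp
  have cmod : Computable₂ ((· % ·) : ℕ → ℕ → ℕ) := Primrec.nat_mod.to_comp
  have cpow : Computable₂ ((· ^ ·) : ℕ → ℕ → ℕ) :=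
    (Primrec₂.unpaired'.mp Nat.Primrec.pow).to_comp
  have hor : Computable₂ ((· || ·) : Bool → Bool → Bool) := (Primrec.dom_bool₂ _).to_comp
  have hbeq : Computable₂ (fun x y : ℕ => x == y) := Primrec.beq.to_comp
  have hlt : Computable₂ (fun x y : ℕ => decide (x < y)) := Primrec.nat_lt.decide.to_comp
  have he : Computable (fun p : ℕ × ℕ => Encodable.encode (q (p.1 + 2))) :=
    Computable.encode.comp (hq.comp (cadd.comp Computable.fst (Computable.const 2)))
  have hP : Computable (fun p : ℕ × ℕ => specP a p.2) :=
    (specP_computable hcomp).comp Computable.snd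
  have hu : Computable (fun p : ℕ × ℕ => (specP a p.2).1) := Computable.fst.comp hP
  have hv : Computable (fun p : ℕ × ℕ => (specP a p.2).2) := Computable.snd.comp hP
  exact hor.comp
    (hbeq.comp (cmod.comp he (Computable.const 2)) (Computable.const 1))
    (hlt.comp
      (cmul.comp (cdiv.comp he (Computable.const 2)) (cpow.comp (Computable.const 2) hv))
      (cadd.comp
        (cmul.comp (cpow.comp (Computable.const 2) (cadd.comp Computable.fst (Computable.const 2)))
          hu)
        (cpow.comp (Computable.const 2) hv)))


/-- A real number is computable if it can be approximated to precision `2^{-k}`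
by a computable sequence of dyadic rationals. -/
def IsComputableReal (x : ℝ) : Prop :=
  ∃ q : ℕ → ℤ, Computable q ∧ ∀ k : ℕ, |x - (q k : ℝ) / 2 ^ k| < (2 : ℝ) ^ (-(k : ℤ))

theorem stmt_8 (a : ℕ → ℕ) (ha : Function.Injective a) (hcomp : Computable a)
    (hA : ¬ ComputablePred (fun n => n ∈ Set.range a)) :
    ¬ IsComputableReal (∑' m, (2 : ℝ) ^ (-(a m : ℤ))) := by
  classical
  rintro ⟨q, hq, hqe⟩
  apply hA
  set t : ℕ → ℝ := fun m => (2 : ℝ) ^ (-(a m : ℤ)) with ht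
  have hpow : ∀ k : ℕ, (2 : ℝ) ^ (-(k : ℤ)) = 1 / 2 ^ k := fun k => by
    rw [zpow_neg, zpow_natCast, one_div]
  have htpos : ∀ m, 0 < t m := fun m => by
    simp only [ht, hpow]; positivity
  have hsum : Summable t := by
    have h0 : Summable (fun n : ℕ => (2 : ℝ) ^ (-(n : ℤ))) := by
      have h1 := summable_geometric_of_lt_one (r := 1 / 2) (by norm_num) (by norm_num)
      refine h1.congr fun n => ?_
      rw [hpow, one_div, one_div, inv_pow]
    exact h0.comp_injective ha
  set s := ∑' m, t m with hs
  have hS : ∀ N, ((specP a N).1 : ℝ) / 2 ^ (specP a N).2 = ∑ m ∈ Finset.range N, t m :=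
    specP_spec a
  have htend : Filter.Tendsto (fun N => ∑ m ∈ Finset.range N, t m)
      Filter.atTop (nhds s) := hsum.hasSum.tendsto_sum_nat
  -- the search terminates for every n
  have hterm : ∀ n, ∃ N, specTest a q n N = true := by
    intro n
    have h1 := hqe (n + 2)
    rw [hpow, abs_lt] at h1
    have hklt : ((q (n + 2) : ℝ) - 1) / 2 ^ (n + 2) < s := by
      rw [sub_div]
      linarith [h1.1]
    obtain ⟨N, hN⟩ := (htend.eventually (eventually_gt_nhds hklt)).exists
    exact ⟨N, by rw [specTest_iff, hS]; exact hN⟩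
  -- correctness of a successful test
  have hkey : ∀ n N, specTest a q n N = true → ((∃ m < N, a m = n) ↔ n ∈ Set.range a) := by
    intro n N hT
    constructor
    · rintro ⟨m, _, rfl⟩; exact ⟨m, rfl⟩
    · rintro ⟨m, rfl⟩
      by_contra hno
      push_neg at hno
      have hmN : N ≤ m := by
        by_contra h'
        exact hno m (by omega) rfl
      have hnotmem : m ∉ Finset.range N := by
        simp only [Finset.mem_range, not_lt]; omega
      have hins : ∑ i ∈ Finset.range N, t i + t m ≤ s := by
        have h2 := Summable.sum_le_tsum (insert m (Finset.range N)) (fun i _ => (htpos i).le) hsum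
        rwa [Finset.sum_insert hnotmem, add_comm] at h2
      have hT' := (specTest_iff a q (a m) N).mp hT
      rw [hS] at hT'
      have h1 := hqe (a m + 2)
      rw [hpow, abs_lt] at h1
      set A := (2 : ℝ) ^ a m with hAdef
      have hApos : (0 : ℝ) < A := by positivity
      have hk4 : (2 : ℝ) ^ (a m + 2) = 4 * A := by rw [pow_add]; ring
      have htm : t m = 1 / A := by simp only [ht, hpow, hAdef]
      -- s - S N < 2 / 2^(a m + 2) = 1/(2A), but t m = 1/A ≤ s - S N
      have hgap : s - ∑ i ∈ Finset.range N, t i < 2 / (4 * A) := by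
        rw [sub_div] at hT'
        rw [← hk4]
        have := h1.2
        have h3 : s < (q (a m + 2) : ℝ) / 2 ^ (a m + 2) + 1 / 2 ^ (a m + 2) := by linarith
        have h4 : ((q (a m + 2) : ℝ)) / 2 ^ (a m + 2) - 1 / 2 ^ (a m + 2)
            < ∑ i ∈ Finset.range N, t i := hT'
        have h5 : (2 : ℝ) / 2 ^ (a m + 2) = 1 / 2 ^ (a m + 2) + 1 / 2 ^ (a m + 2) := by ring
        rw [h5]
        linarith
      have hfin : 1 / A < 2 / (4 * A) := by
        rw [htm] at hins
        linarith
      rw [div_lt_div_iff₀ hApos (by positivity)] at hfin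
      linarith
  -- assemble the computable predicate
  rw [ComputablePred.computable_iff]
  refine ⟨fun n => decide (n ∈ Set.range a), ?_, by funext n; simp⟩
  have hTc : Computable₂ (specTest a q) := specTest_computable hcomp hq
  have hBc : Computable₂ (specB a) := specB_computable hcomp
  have hG : Partrec fun n =>
      Part.map (specB a n) (Nat.rfind fun N => Part.some (specTest a q n N)) :=
    Partrec.map (Partrec.rfind hTc.partrec₂) hBc
  apply hG.of_eq_tot
  intro n
  obtain ⟨N0, hN0⟩ := hterm n
  have hdom : (Nat.rfind fun N => Part.some (specTest a q n N)).Dom := by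
    apply Nat.rfind_dom.2
    exact ⟨N0, by simpa using hN0, fun {_} _ => trivial⟩
  set N := (Nat.rfind fun N => Part.some (specTest a q n N)).get hdom with hNdef
  have hmem : N ∈ Nat.rfind fun N => Part.some (specTest a q n N) := Part.get_mem hdom
  have hTrue : specTest a q n N = true := by
    have h6 := Nat.rfind_spec hmem
    simpa using h6
  rw [Part.mem_map_iff]
  refine ⟨N, hmem, ?_⟩
  rw [Bool.eq_iff_iff, specB_iff, decide_eq_true_eq]
  exact hkey n N hTrue
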